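/- Let T : ℝⁿ → ℝⁿ be nonexpansive in the sup-norm, order-monotone, and order-convex in the sense that for all 0 ≤ α ≤ 1 and all U, V, W with U - (1-α)V - αW ≤ B componentwise for some B, one has T U - (1-α) T V - α T W ≤ P B for some componentwise-monotone nonexpansive linear map P. Suppose T has a fixed point U* with U^0 ≤ U*, and U^0 ≤ T U^0. Define β_k = 1/(k+1) and U^k = β_k U^0 + (1-β_k) T U^{k-1}. Then ‖T U^k - U^k‖_∞ ≤ ‖U^0 - U*‖_∞ / (k+1) for all k ≥ 0. -/

import Mathlib

theorem stmt_6 (n : ℕ) (hn : 0 < n)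
    (T : (Fin n → ℝ) → (Fin n → ℝ))
    (hT : ∀ x y : Fin n → ℝ, ‖T x - T y‖ ≤ ‖x - y‖)
    (hmono : ∀ x y : Fin n → ℝ, x ≤ y → T x ≤ T y)
    (hconv : ∀ α : ℝ, 0 ≤ α → α ≤ 1 → ∀ U V W B : Fin n → ℝ,
      U - (1 - α) • V - α • W ≤ B →
      ∃ P : (Fin n → ℝ) →ₗ[ℝ] (Fin n → ℝ),
        (∀ x y : Fin n → ℝ, x ≤ y → P x ≤ P y) ∧
        (∀ x : Fin n → ℝ, ‖P x‖ ≤ ‖x‖) ∧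
        T U - (1 - α) • T V - α • T W ≤ P B)
    (Ustar : Fin n → ℝ) (hfix : T Ustar = Ustar)
    (U : ℕ → Fin n → ℝ)
    (hinit : U 0 ≤ Ustar) (h0 : U 0 ≤ T (U 0))
    (β : ℕ → ℝ) (hβ : ∀ k, β k = 1 / (k+1 : ℝ))
    (hU : ∀ k : ℕ, U (k+1) = β (k+1) • U 0 + (1 - β (k+1)) • T (U k)) :
    ∀ k : ℕ, ‖T (U k) - U k‖ ≤ ‖U 0 - Ustar‖ / (k+1 : ℝ) := by
  have hb : ∀ k : ℕ, β (k+1) = 1/((k:ℝ)+2) := by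
    intro k; rw [hβ]; push_cast; ring_nf
  have hb0 : ∀ k : ℕ, (0:ℝ) ≤ 1/((k:ℝ)+2) := by intro k; positivity
  have hb1 : ∀ k : ℕ, 1/((k:ℝ)+2) ≤ 1 := by
    intro k
    rw [div_le_one (by positivity)]
    have : (0:ℝ) ≤ (k:ℝ) := Nat.cast_nonneg k
    linarith
  -- joint invariant
  have key : ∀ k, U 0 ≤ U k ∧ U k ≤ U (k+1) ∧ U k ≤ T (U k) := by
    intro k
    induction k with
    | zero =>
      refine ⟨le_refl _, ?_, h0⟩
      intro i
      rw [hU 0, hb 0]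
      simp only [Pi.add_apply, Pi.smul_apply, smul_eq_mul]
      have := h0 i
      norm_num
      linarith
    | succ k ih =>
      obtain ⟨i1, i2, i3⟩ := ih
      have m1 : T (U k) ≤ T (U (k+1)) := hmono _ _ i2
      have a1 : U 0 ≤ U (k+1) := le_trans i1 i2
      have hU0Tk : U 0 ≤ T (U k) := le_trans i1 i3
      have a3' : U (k+1) ≤ T (U k) := by
        intro i
        rw [hU k, hb k]
        simp only [Pi.add_apply, Pi.smul_apply, smul_eq_mul]
        have h1 := hU0Tk i
        have hc : (0:ℝ) ≤ 1/((k:ℝ)+2) := hb0 k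
        nlinarith [mul_nonneg hc (sub_nonneg.mpr h1)]
      have a3 : U (k+1) ≤ T (U (k+1)) := le_trans a3' m1
      have a2 : U (k+1) ≤ U (k+2) := by
        intro i
        rw [hU k, hU (k+1), hb k, hb (k+1)]
        simp only [Pi.add_apply, Pi.smul_apply, smul_eq_mul]
        push_cast
        have e3 : ((k:ℝ)+1)+2 = (k:ℝ)+3 := by ring
        rw [e3]
        have h2 := m1 i
        have h1 : U 0 i ≤ T (U (k+1)) i := le_trans (a1 i) (a3 i)
        have hc : (0:ℝ) < (k:ℝ)+2 := by positivity
        have hc' : (0:ℝ) < (k:ℝ)+3 := by positivity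
        have d1 : (0:ℝ) ≤ 1/((k:ℝ)+2) - 1/((k:ℝ)+3) := by
          rw [sub_nonneg]
          apply one_div_le_one_div_of_le hc
          linarith
        have d2 : (0:ℝ) ≤ 1 - 1/((k:ℝ)+2) := by linarith [hb1 k]
        nlinarith [mul_nonneg d1 (sub_nonneg.mpr h1), mul_nonneg d2 (sub_nonneg.mpr h2)]
      exact ⟨a1, a2, a3⟩
  -- main estimate
  have main : ∀ k, T (U k) - U k ≤ (1/((k:ℝ)+1)) • (Ustar - U 0) := by
    intro k
    induction k with
    | zero =>
      have hTle : T (U 0) ≤ Ustar := by rw [← hfix]; exact hmono _ _ hinit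
      intro i
      simp only [Pi.sub_apply, Pi.smul_apply, smul_eq_mul]
      have := hTle i
      norm_num
      linarith
    | succ k ih =>
      set b : ℝ := 1/((k:ℝ)+2) with hbdef
      obtain ⟨P, hPmono, -, hPB⟩ :=
        hconv b (hb0 k) (hb1 k) (U (k+1)) (U k) Ustar
          (U (k+1) - (1 - b) • U k - b • Ustar) le_rfl
      rw [hfix] at hPB
      have hBeq : U (k+1) - (1 - b) • U k - b • Ustar
          = (1 - b) • (T (U k) - U k) - b • (Ustar - U 0) := by
        rw [hU k, hb k]
        funext i
        simp only [Pi.sub_apply, Pi.add_apply, Pi.smul_apply, smul_eq_mul]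
        ring
      have hle : (1 - b) • (T (U k) - U k) ≤ b • (Ustar - U 0) := by
        intro i
        have h1 := ih i
        simp only [Pi.sub_apply, Pi.smul_apply, smul_eq_mul] at h1 ⊢
        have d2 : (0:ℝ) ≤ 1 - b := by have := hb1 k; rw [hbdef]; linarith
        have hkpos : (0:ℝ) < (k:ℝ)+1 := by positivity
        have heq : (1 - b) * (1/((k:ℝ)+1)) = b := by
          rw [hbdef]; field_simp; ring
        calc (1 - b) * (T (U k) i - U k i)
            ≤ (1 - b) * ((1/((k:ℝ)+1)) * (Ustar i - U 0 i)) :=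
              mul_le_mul_of_nonneg_left h1 d2
          _ = b * (Ustar i - U 0 i) := by rw [← mul_assoc, heq]
      have step1 : P (U (k+1) - (1 - b) • U k - b • Ustar) ≤ (0 : Fin n → ℝ) := by
        rw [hBeq]
        have hPle := hPmono _ _ hle
        rw [map_smul, map_smul] at hPle
        calc P ((1 - b) • (T (U k) - U k) - b • (Ustar - U 0))
            = P ((1 - b) • (T (U k) - U k)) - P (b • (Ustar - U 0)) := map_sub _ _ _
          _ ≤ 0 := by
              rw [map_smul, map_smul]
              exact sub_nonpos.mpr hPle
      have expand : T (U (k+1)) - U (k+1)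
          = (T (U (k+1)) - (1 - b) • T (U k) - b • Ustar) + b • (Ustar - U 0) := by
        rw [hU k, hb k]
        funext i
        simp only [Pi.sub_apply, Pi.add_apply, Pi.smul_apply, smul_eq_mul]
        ring
      have hfin : T (U (k+1)) - U (k+1) ≤ b • (Ustar - U 0) := by
        rw [expand]
        calc (T (U (k+1)) - (1 - b) • T (U k) - b • Ustar) + b • (Ustar - U 0)
            ≤ P (U (k+1) - (1 - b) • U k - b • Ustar) + b • (Ustar - U 0) :=
              add_le_add_left hPB _
          _ ≤ 0 + b • (Ustar - U 0) := add_le_add_left step1 _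
          _ = b • (Ustar - U 0) := zero_add _
      have hcoef : b = 1/((((k+1):ℕ):ℝ)+1) := by rw [hbdef]; push_cast; ring
      rw [hcoef] at hfin
      exact hfin
  -- conclude
  intro k
  have h2 := main k
  have hkpos : (0:ℝ) < (k:ℝ)+1 := by positivity
  rw [pi_norm_le_iff_of_nonneg (by positivity)]
  intro i
  have hEnn : (0:ℝ) ≤ T (U k) i - U k i := sub_nonneg.mpr ((key k).2.2 i)
  have h3 := h2 i
  simp only [Pi.sub_apply, Pi.smul_apply, smul_eq_mul] at h3
  have h4 : |(Ustar - U 0) i| ≤ ‖Ustar - U 0‖ := by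
    simpa [Real.norm_eq_abs] using norm_le_pi_norm (Ustar - U 0) i
  have h4' : Ustar i - U 0 i ≤ ‖Ustar - U 0‖ := by
    have := le_abs_self ((Ustar - U 0) i)
    simp only [Pi.sub_apply] at this h4
    linarith
  have h5 : (1/((k:ℝ)+1)) * (Ustar i - U 0 i) ≤ (1/((k:ℝ)+1)) * ‖Ustar - U 0‖ :=
    mul_le_mul_of_nonneg_left h4' (by positivity)
  have hrev : ‖U 0 - Ustar‖ = ‖Ustar - U 0‖ := norm_sub_rev _ _
  have hdiv : ‖Ustar - U 0‖ / ((k:ℝ)+1) = (1/((k:ℝ)+1)) * ‖Ustar - U 0‖ := by ring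
  rw [Real.norm_eq_abs, Pi.sub_apply, abs_of_nonneg hEnn, hrev, hdiv]
  linarith
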